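/- Let n ≥ 1 and m ≥ 1 be integers, let a > 0 be a real number, and let k ≥ 0 be an integer. Then the k-th iterated Laplacian of the polyharmonic heat kernel satisfies (Δ^[k] E_{m,a})(x) = (2π)^{−n} ∫_{ℝⁿ} (−‖s‖²)^k · exp(i⟨x,s⟩ − a‖s‖^{2m}) ds for every x ∈ ℝⁿ; in particular ((−Δ)^m E_{m,a})(x) = (2π)^{−n} ∫_{ℝⁿ} ‖s‖^{2m} exp(i⟨x,s⟩ − a‖s‖^{2m}) ds. -/

import Mathlib

open MeasureTheory Real Complex

noncomputable def heatKernel (n m : ℕ) (a : ℝ) (x : EuclideanSpace ℝ (Fin n)) : ℂ :=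
  ((2 * Real.pi) ^ n : ℝ)⁻¹ •
    ∫ s : EuclideanSpace ℝ (Fin n),
      Complex.exp (Complex.I * ((inner ℝ x s : ℝ) : ℂ) - (a : ℂ) * ((‖s‖ : ℝ) : ℂ) ^ (2 * m))

noncomputable def Laplacian' {n : ℕ} {F : Type*} [NormedAddCommGroup F] [NormedSpace ℝ F]
    (f : EuclideanSpace ℝ (Fin n) → F) : EuclideanSpace ℝ (Fin n) → F :=
  fun x => ∑ i : Fin n,
    fderiv ℝ (fun y => fderiv ℝ f y (EuclideanSpace.single i 1)) x (EuclideanSpace.single i 1)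

namespace HKaux

variable {n : ℕ}

noncomputable def Fi (φ : EuclideanSpace ℝ (Fin n) → ℂ) (x : EuclideanSpace ℝ (Fin n)) : ℂ :=
  ∫ s : EuclideanSpace ℝ (Fin n), φ s * Complex.exp (Complex.I * ((inner ℝ x s : ℝ) : ℂ))

def Good (φ : EuclideanSpace ℝ (Fin n) → ℂ) : Prop :=
  Continuous φ ∧
    ∀ p : ℕ, Integrable (fun s : EuclideanSpace ℝ (Fin n) => ‖s‖ ^ p * ‖φ s‖)

noncomputable def Fd (φ : EuclideanSpace ℝ (Fin n) → ℂ) (x : EuclideanSpace ℝ (Fin n)) :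
    EuclideanSpace ℝ (Fin n) →L[ℝ] ℂ :=
  ∫ s : EuclideanSpace ℝ (Fin n),
    (φ s * Complex.exp (Complex.I * ((inner ℝ x s : ℝ) : ℂ)) * Complex.I) •
      (Complex.ofRealCLM.comp (innerSL ℝ s))

lemma cont_base :
    Continuous fun s : EuclideanSpace ℝ (Fin n) => Complex.ofRealCLM.comp (innerSL ℝ s) := by
  exact ((ContinuousLinearMap.compL ℝ (EuclideanSpace ℝ (Fin n)) ℝ ℂ
    Complex.ofRealCLM).continuous.comp (innerSL ℝ).continuous)

lemma cont_cexp (x : EuclideanSpace ℝ (Fin n)) :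
    Continuous fun s : EuclideanSpace ℝ (Fin n) =>
      Complex.exp (Complex.I * ((inner ℝ x s : ℝ) : ℂ)) := by
  exact Complex.continuous_exp.comp (continuous_const.mul
    (Complex.continuous_ofReal.comp (continuous_const.inner continuous_id)))

lemma norm_cexp (r : ℝ) : ‖Complex.exp (Complex.I * (r : ℂ))‖ = 1 := by
  simp [Complex.norm_exp]

lemma norm_Fd_term_le (φ : EuclideanSpace ℝ (Fin n) → ℂ) (r : ℝ)
    (s : EuclideanSpace ℝ (Fin n)) :
    ‖(φ s * Complex.exp (Complex.I * (r : ℂ)) * Complex.I) •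
        (Complex.ofRealCLM.comp (innerSL ℝ s))‖ ≤ ‖s‖ * ‖φ s‖ := by
  refine ContinuousLinearMap.opNorm_le_bound _ (by positivity) fun v => ?_
  rw [ContinuousLinearMap.smul_apply]
  simp only [ContinuousLinearMap.coe_comp', Function.comp_apply, innerSL_apply_apply,
    Complex.ofRealCLM_apply, smul_eq_mul]
  rw [norm_mul, norm_mul, norm_mul, norm_cexp, Complex.norm_I, Complex.norm_real]
  have h := abs_real_inner_le_norm s v
  have h0 : |(inner ℝ s v : ℝ)| = ‖(inner ℝ s v : ℝ)‖ := rfl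
  nlinarith [norm_nonneg (φ s), norm_nonneg s, norm_nonneg v, abs_nonneg (inner ℝ s v : ℝ)]

lemma norm_base_le (s : EuclideanSpace ℝ (Fin n)) :
    ‖Complex.ofRealCLM.comp (innerSL ℝ s)‖ ≤ ‖s‖ := by
  refine ContinuousLinearMap.opNorm_le_bound _ (norm_nonneg s) fun v => ?_
  simp only [ContinuousLinearMap.coe_comp', Function.comp_apply, innerSL_apply_apply,
    Complex.ofRealCLM_apply, Complex.norm_real]
  exact (abs_real_inner_le_norm s v).trans (le_refl _)


variable {n : ℕ}

lemma hasFDerivAt_integrand (φ : EuclideanSpace ℝ (Fin n) → ℂ) (s x : EuclideanSpace ℝ (Fin n)) :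
    HasFDerivAt (fun y : EuclideanSpace ℝ (Fin n) =>
        φ s * Complex.exp (Complex.I * ((inner ℝ y s : ℝ) : ℂ)))
      ((φ s * Complex.exp (Complex.I * ((inner ℝ x s : ℝ) : ℂ)) * Complex.I) •
        (Complex.ofRealCLM.comp (innerSL ℝ s))) x := by
  have h0 : HasFDerivAt (fun y : EuclideanSpace ℝ (Fin n) => (inner ℝ y s : ℝ)) (innerSL ℝ s) x := by
    have he : (fun y : EuclideanSpace ℝ (Fin n) => (inner ℝ y s : ℝ)) = fun y => innerSL ℝ s y :=
      funext fun y => real_inner_comm s y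
    rw [he]
    exact (innerSL ℝ s).hasFDerivAt
  have h1 : HasFDerivAt (fun y : EuclideanSpace ℝ (Fin n) => ((inner ℝ y s : ℝ) : ℂ))
      (Complex.ofRealCLM.comp (innerSL ℝ s)) x := Complex.ofRealCLM.hasFDerivAt.comp x h0
  have h2 := h1.const_mul Complex.I
  have h3 := h2.cexp
  have h4 := h3.const_mul (φ s)
  simpa [smul_smul, mul_assoc] using h4

lemma integrable_Fi_integrand {φ : EuclideanSpace ℝ (Fin n) → ℂ} (hφ : Good φ)
    (x : EuclideanSpace ℝ (Fin n)) :
    Integrable (fun s : EuclideanSpace ℝ (Fin n) =>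
      φ s * Complex.exp (Complex.I * ((inner ℝ x s : ℝ) : ℂ))) := by
  refine ((hφ.2 0).mono' ((hφ.1.mul (cont_cexp x)).aestronglyMeasurable) ?_)
  refine Filter.Eventually.of_forall fun s => ?_
  rw [norm_mul, norm_cexp, mul_one, pow_zero, one_mul]


lemma integrable_Fd_integrand {φ : EuclideanSpace ℝ (Fin n) → ℂ} (hφ : Good φ)
    (x : EuclideanSpace ℝ (Fin n)) :
    Integrable (fun s : EuclideanSpace ℝ (Fin n) =>
      (φ s * Complex.exp (Complex.I * ((inner ℝ x s : ℝ) : ℂ)) * Complex.I) •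
        (Complex.ofRealCLM.comp (innerSL ℝ s))) := by
  have hme : AEStronglyMeasurable (fun s : EuclideanSpace ℝ (Fin n) =>
      (φ s * Complex.exp (Complex.I * ((inner ℝ x s : ℝ) : ℂ)) * Complex.I) •
        (Complex.ofRealCLM.comp (innerSL ℝ s))) volume :=
    (((hφ.1.mul (cont_cexp x)).mul continuous_const).smul cont_base).aestronglyMeasurable
  have hb := hφ.2 1
  simp only [pow_one] at hb
  refine hb.mono' hme ?_
  refine Filter.Eventually.of_forall fun s => ?_
  exact norm_Fd_term_le φ _ s

lemma hasFDerivAt_Fi {φ : EuclideanSpace ℝ (Fin n) → ℂ} (hφ : Good φ)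
    (x : EuclideanSpace ℝ (Fin n)) : HasFDerivAt (Fi φ) (Fd φ x) x := by
  refine hasFDerivAt_integral_of_dominated_of_fderiv_le (𝕜 := ℝ) (s := Metric.ball x 1)
    (F := fun y s => φ s * Complex.exp (Complex.I * ((inner ℝ y s : ℝ) : ℂ)))
    (F' := fun y s => (φ s * Complex.exp (Complex.I * ((inner ℝ y s : ℝ) : ℂ)) * Complex.I) •
      (Complex.ofRealCLM.comp (innerSL ℝ s)))
    (bound := fun s => ‖s‖ * ‖φ s‖) (Metric.ball_mem_nhds x one_pos) ?_ (integrable_Fi_integrand hφ x) ?_ ?_ ?_ ?_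
  · exact Filter.Eventually.of_forall fun y =>
      (integrable_Fi_integrand hφ y).aestronglyMeasurable
  · exact (integrable_Fd_integrand hφ x).aestronglyMeasurable
  · refine Filter.Eventually.of_forall fun s => fun y _ => ?_
    exact norm_Fd_term_le φ _ s
  · have hb := hφ.2 1
    simpa only [pow_one] using hb
  · exact Filter.Eventually.of_forall fun s => fun y _ => hasFDerivAt_integrand φ s y

lemma fderiv_Fi_apply {φ : EuclideanSpace ℝ (Fin n) → ℂ} (hφ : Good φ)
    (x : EuclideanSpace ℝ (Fin n)) (i : Fin n) :
    fderiv ℝ (Fi φ) x (EuclideanSpace.single i 1) =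
      Fi (fun s => Complex.I * ((s i : ℝ) : ℂ) * φ s) x := by
  rw [(hasFDerivAt_Fi hφ x).fderiv]
  rw [Fd, ContinuousLinearMap.integral_apply (integrable_Fd_integrand hφ x)]
  unfold Fi
  refine integral_congr_ae (Filter.Eventually.of_forall fun s => ?_)
  simp only [ContinuousLinearMap.smul_apply, ContinuousLinearMap.coe_comp',
    Function.comp_apply, innerSL_apply_apply, Complex.ofRealCLM_apply,
    EuclideanSpace.inner_single_right, conj_trivial, one_mul, smul_eq_mul]
  ring

lemma abs_coord_le_norm (s : EuclideanSpace ℝ (Fin n)) (i : Fin n) : |s i| ≤ ‖s‖ := by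
  have h := abs_real_inner_le_norm (EuclideanSpace.single i (1 : ℝ)) s
  rw [EuclideanSpace.inner_single_left] at h
  simpa using h

lemma cont_coord (i : Fin n) : Continuous fun s : EuclideanSpace ℝ (Fin n) => s i := by
  exact (EuclideanSpace.proj i : EuclideanSpace ℝ (Fin n) →L[ℝ] ℝ).continuous

lemma Good.mul_coord {φ : EuclideanSpace ℝ (Fin n) → ℂ} (hφ : Good φ) (i : Fin n) :
    Good (fun s => Complex.I * ((s i : ℝ) : ℂ) * φ s) := by
  constructor
  · exact (continuous_const.mul
      (Complex.continuous_ofReal.comp (cont_coord i))).mul hφ.1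
  intro p
  have hme : AEStronglyMeasurable
      (fun s : EuclideanSpace ℝ (Fin n) => ‖s‖ ^ p * ‖Complex.I * ((s i : ℝ) : ℂ) * φ s‖)
      volume := by
    refine Continuous.aestronglyMeasurable ?_
    exact (continuous_norm.pow p).mul ((continuous_const.mul
      (Complex.continuous_ofReal.comp (cont_coord i))).mul hφ.1).norm
  refine (hφ.2 (p + 1)).mono' hme (Filter.Eventually.of_forall fun s => ?_)
  rw [Real.norm_eq_abs, _root_.abs_of_nonneg (by positivity)]
  rw [norm_mul, norm_mul, Complex.norm_I, one_mul, Complex.norm_real, Real.norm_eq_abs]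
  calc ‖s‖ ^ p * (|s i| * ‖φ s‖) ≤ ‖s‖ ^ p * (‖s‖ * ‖φ s‖) := by
        exact mul_le_mul_of_nonneg_left (mul_le_mul_of_nonneg_right
          (abs_coord_le_norm s i) (norm_nonneg _)) (by positivity)
    _ = ‖s‖ ^ (p + 1) * ‖φ s‖ := by rw [pow_succ]; ring

lemma norm_sq_eq_sum_coord (s : EuclideanSpace ℝ (Fin n)) :
    ((‖s‖ : ℝ) : ℂ) ^ 2 = ∑ i : Fin n, ((s i : ℝ) : ℂ) ^ 2 := by
  have h : (‖s‖ : ℝ) ^ 2 = ∑ i : Fin n, (s i) ^ 2 := by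
    rw [← real_inner_self_eq_norm_sq]
    simp only [PiLp.inner_apply, RCLike.inner_apply, conj_trivial, sq]
  rw [← Complex.ofReal_pow, h]
  push_cast
  rfl

lemma laplacian_Fi {φ : EuclideanSpace ℝ (Fin n) → ℂ} (hφ : Good φ) :
    Laplacian' (Fi φ) = Fi (fun s => (-((‖s‖ : ℝ) : ℂ) ^ 2) * φ s) := by
  funext x
  unfold Laplacian'
  have h1 : ∀ i : Fin n,
      (fun y => fderiv ℝ (Fi φ) y (EuclideanSpace.single i 1)) =
        Fi (fun s => Complex.I * ((s i : ℝ) : ℂ) * φ s) :=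
    fun i => funext fun y => fderiv_Fi_apply hφ y i
  have h2 : ∀ i : Fin n,
      fderiv ℝ (fun y => fderiv ℝ (Fi φ) y (EuclideanSpace.single i 1)) x
          (EuclideanSpace.single i 1) =
        Fi (fun s => Complex.I * ((s i : ℝ) : ℂ) *
          (Complex.I * ((s i : ℝ) : ℂ) * φ s)) x := by
    intro i
    rw [h1 i, fderiv_Fi_apply (hφ.mul_coord i) x i]
  rw [Finset.sum_congr rfl fun i _ => h2 i]
  unfold Fi
  rw [← integral_finset_sum]
  · refine integral_congr_ae (Filter.Eventually.of_forall fun s => ?_)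
    have hs := norm_sq_eq_sum_coord s
    calc ∑ i : Fin n, (Complex.I * ((s i : ℝ) : ℂ) *
            (Complex.I * ((s i : ℝ) : ℂ) * φ s)) *
            Complex.exp (Complex.I * ((inner ℝ x s : ℝ) : ℂ))
        = ∑ i : Fin n, -(((s i : ℝ) : ℂ) ^ 2) *
            (φ s * Complex.exp (Complex.I * ((inner ℝ x s : ℝ) : ℂ))) := by
          refine Finset.sum_congr rfl fun i _ => ?_
          rw [show Complex.I * ((s i : ℝ) : ℂ) * (Complex.I * ((s i : ℝ) : ℂ) * φ s) *
              Complex.exp (Complex.I * ((inner ℝ x s : ℝ) : ℂ)) =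
              (Complex.I * Complex.I) * (((s i : ℝ) : ℂ) ^ 2 *
                (φ s * Complex.exp (Complex.I * ((inner ℝ x s : ℝ) : ℂ)))) by ring,
            Complex.I_mul_I]
          ring
      _ = (-((‖s‖ : ℝ) : ℂ) ^ 2 * φ s) * Complex.exp (Complex.I * ((inner ℝ x s : ℝ) : ℂ)) := by
          rw [← Finset.sum_mul, Finset.sum_neg_distrib, ← hs]
          ring
  · intro i _
    exact integrable_Fi_integrand ((hφ.mul_coord i).mul_coord i) x



lemma Good.mul_pow {φ : EuclideanSpace ℝ (Fin n) → ℂ} (hφ : Good φ) (k : ℕ) :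
    Good (fun s => (-((‖s‖ : ℝ) : ℂ) ^ 2) ^ k * φ s) := by
  constructor
  · exact ((((Complex.continuous_ofReal.comp continuous_norm).pow 2).neg).pow k).mul hφ.1
  intro p
  have he : (fun s : EuclideanSpace ℝ (Fin n) =>
      ‖s‖ ^ p * ‖(-((‖s‖ : ℝ) : ℂ) ^ 2) ^ k * φ s‖) =
      fun s : EuclideanSpace ℝ (Fin n) => ‖s‖ ^ (p + 2 * k) * ‖φ s‖ := by
    funext s
    rw [norm_mul, norm_pow, norm_neg, norm_pow, Complex.norm_real, Real.norm_eq_abs, abs_norm,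
      ← pow_mul, ← mul_assoc, ← pow_add]
  rw [he]
  exact hφ.2 (p + 2 * k)

lemma iterate_laplacian_Fi {φ : EuclideanSpace ℝ (Fin n) → ℂ} (hφ : Good φ) (k : ℕ) :
    Laplacian'^[k] (Fi φ) = Fi (fun s => (-((‖s‖ : ℝ) : ℂ) ^ 2) ^ k * φ s) := by
  induction k with
  | zero =>
    simp only [Function.iterate_zero, id_eq, pow_zero]
    have : (fun s : EuclideanSpace ℝ (Fin n) => (1 : ℂ) * φ s) = φ := funext fun s => one_mul _
    rw [this]
  | succ k ih =>
    rw [Function.iterate_succ_apply', ih, laplacian_Fi (hφ.mul_pow k)]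
    have hfun : (fun s : EuclideanSpace ℝ (Fin n) =>
        (-((‖s‖ : ℝ) : ℂ) ^ 2) * ((-((‖s‖ : ℝ) : ℂ) ^ 2) ^ k * φ s)) =
        fun s => (-((‖s‖ : ℝ) : ℂ) ^ 2) ^ (k + 1) * φ s := funext fun s => by ring
    rw [hfun]

lemma integrable_pow_mul_exp {m : ℕ} (hm : 1 ≤ m) {a : ℝ} (ha : 0 < a) (p : ℕ) :
    Integrable (fun s : EuclideanSpace ℝ (Fin n) =>
      ‖s‖ ^ p * Real.exp (-(a * ‖s‖ ^ (2 * m)))) := by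
  set q : ℕ := p + (n + 1) with hq
  set C : ℝ := Real.exp (2 * a) * (q.factorial / a ^ q) with hC
  have key : ∀ t : ℝ, 0 ≤ t →
      t ^ p * Real.exp (-(a * t ^ (2 * m))) ≤ C * (1 + t) ^ (-((n : ℝ) + 1)) := by
    intro t ht
    have h1t : (0 : ℝ) < 1 + t := by linarith
    have hstep : t - 1 ≤ t ^ (2 * m) := by
      rcases le_total t 1 with h | h
      · have h0 : (0 : ℝ) ≤ t ^ (2 * m) := by positivity
        linarith
      · have h2 : t ≤ t ^ (2 * m) := by
          calc t = t ^ 1 := (pow_one t).symm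
            _ ≤ t ^ (2 * m) := pow_le_pow_right₀ h (by omega)
        linarith
    have hexp : Real.exp (-(a * t ^ (2 * m))) ≤ Real.exp a * Real.exp (-(a * t)) := by
      rw [← Real.exp_add]
      apply Real.exp_le_exp.2
      nlinarith [mul_le_mul_of_nonneg_left hstep ha.le]
    have hq2 : (a * (1 + t)) ^ q ≤ q.factorial * Real.exp (a * (1 + t)) := by
      have h3 := Real.pow_div_factorial_le_exp (x := a * (1 + t)) (by positivity) q
      rw [div_le_iff₀ (by positivity : (0:ℝ) < (q.factorial : ℝ))] at h3
      linarith [h3]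
    have hpow : (1 + t) ^ q ≤ (q.factorial : ℝ) / a ^ q * Real.exp (a * (1 + t)) := by
      have hps : (1 + t) ^ q = (a * (1 + t)) ^ q / a ^ q := by
        rw [mul_pow]
        field_simp
      rw [hps, div_le_iff₀ (by positivity : (0:ℝ) < a ^ q)]
      calc (a * (1 + t)) ^ q ≤ (q.factorial : ℝ) * Real.exp (a * (1 + t)) := hq2
        _ = (q.factorial : ℝ) / a ^ q * Real.exp (a * (1 + t)) * a ^ q := by
            field_simp
    have hfp : t ^ p ≤ (1 + t) ^ p := pow_le_pow_left₀ ht (by linarith) p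
    have hfin : t ^ p * Real.exp (-(a * t ^ (2 * m))) * (1 + t) ^ (n + 1) ≤ C := by
      calc t ^ p * Real.exp (-(a * t ^ (2 * m))) * (1 + t) ^ (n + 1)
          ≤ (1 + t) ^ p * (Real.exp a * Real.exp (-(a * t))) * (1 + t) ^ (n + 1) := by
            have e1 : (0:ℝ) ≤ (1+t) ^ (n+1) := by positivity
            have e2 : (0:ℝ) ≤ Real.exp (-(a * t ^ (2 * m))) := (Real.exp_pos _).le
            have e3 := mul_le_mul hfp hexp e2 (by positivity)
            nlinarith [e3]
        _ = Real.exp a * Real.exp (-(a * t)) * (1 + t) ^ q := by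
            rw [hq, pow_add]
            ring
        _ ≤ Real.exp a * Real.exp (-(a * t)) *
              ((q.factorial : ℝ) / a ^ q * Real.exp (a * (1 + t))) := by
            refine mul_le_mul_of_nonneg_left hpow (by positivity)
        _ = (q.factorial : ℝ) / a ^ q * Real.exp (a + -(a * t) + a * (1 + t)) := by
            rw [Real.exp_add, Real.exp_add]
            ring
        _ = C := by
            rw [hC, show a + -(a * t) + a * (1 + t) = 2 * a by ring]
            ring
    have hrw : C * (1 + t) ^ (-((n : ℝ) + 1)) = C / (1 + t) ^ (n + 1) := by
      rw [show -((n : ℝ) + 1) = -(((n + 1 : ℕ) : ℝ)) by push_cast; ring,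
        Real.rpow_neg h1t.le, Real.rpow_natCast, div_eq_mul_inv]
    rw [hrw, le_div_iff₀ (by positivity : (0:ℝ) < (1 + t) ^ (n + 1))]
    exact hfin
  have hint : Integrable (fun s : EuclideanSpace ℝ (Fin n) =>
      C * (1 + ‖s‖) ^ (-((n : ℝ) + 1))) := by
    refine (integrable_one_add_norm ?_).const_mul C
    rw [finrank_euclideanSpace_fin]
    linarith
  refine hint.mono' ?_ (Filter.Eventually.of_forall fun s => ?_)
  · refine Continuous.aestronglyMeasurable ?_
    exact (continuous_norm.pow p).mul
      (Real.continuous_exp.comp ((continuous_const.mul (continuous_norm.pow (2 * m))).neg))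
  · rw [Real.norm_eq_abs, _root_.abs_of_nonneg (by positivity)]
    exact key ‖s‖ (norm_nonneg s)

end HKaux


namespace HKaux

variable {n : ℕ}

lemma good_base {m : ℕ} (hm : 1 ≤ m) {a : ℝ} (ha : 0 < a) (c : ℝ) :
    Good (fun s : EuclideanSpace ℝ (Fin n) =>
      c • Complex.exp (-(a : ℂ) * ((‖s‖ : ℝ) : ℂ) ^ (2 * m))) := by
  constructor
  · refine Continuous.const_smul ?_ c
    exact Complex.continuous_exp.comp
      (continuous_const.mul ((Complex.continuous_ofReal.comp continuous_norm).pow (2 * m)))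
  intro p
  have he : (fun s : EuclideanSpace ℝ (Fin n) =>
      ‖s‖ ^ p * ‖c • Complex.exp (-(a : ℂ) * ((‖s‖ : ℝ) : ℂ) ^ (2 * m))‖) =
      fun s : EuclideanSpace ℝ (Fin n) =>
        |c| * (‖s‖ ^ p * Real.exp (-(a * ‖s‖ ^ (2 * m)))) := by
    funext s
    rw [norm_smul, Real.norm_eq_abs]
    have hz : (-(a : ℂ) * ((‖s‖ : ℝ) : ℂ) ^ (2 * m)) = ((-(a * ‖s‖ ^ (2 * m)) : ℝ) : ℂ) := by
      push_cast
      ring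
    rw [hz, Complex.norm_exp_ofReal]
    ring
  rw [he]
  exact (integrable_pow_mul_exp hm ha p).const_mul |c|

end HKaux

theorem heatKernel_iteratedLaplacian (n m : ℕ) (hn : 1 ≤ n) (hm : 1 ≤ m) (a : ℝ) (ha : 0 < a)
    (k : ℕ) :
    (∀ x : EuclideanSpace ℝ (Fin n),
      (Laplacian'^[k] (heatKernel n m a)) x =
        ((2 * Real.pi) ^ n : ℝ)⁻¹ •
          ∫ s : EuclideanSpace ℝ (Fin n),
            (-((‖s‖ : ℝ) : ℂ) ^ 2) ^ k *
              Complex.exp (Complex.I * ((inner ℝ x s : ℝ) : ℂ) -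
                (a : ℂ) * ((‖s‖ : ℝ) : ℂ) ^ (2 * m))) ∧
    (∀ x : EuclideanSpace ℝ (Fin n),
      (-1 : ℂ) ^ m * (Laplacian'^[m] (heatKernel n m a)) x =
        ((2 * Real.pi) ^ n : ℝ)⁻¹ •
          ∫ s : EuclideanSpace ℝ (Fin n),
            ((‖s‖ : ℝ) : ℂ) ^ (2 * m) *
              Complex.exp (Complex.I * ((inner ℝ x s : ℝ) : ℂ) -
                (a : ℂ) * ((‖s‖ : ℝ) : ℂ) ^ (2 * m))) := by
  set c : ℝ := ((2 * Real.pi) ^ n : ℝ)⁻¹ with hc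
  have hgood := HKaux.good_base (n := n) hm ha c
  have hK : heatKernel n m a = HKaux.Fi (fun s : EuclideanSpace ℝ (Fin n) =>
      c • Complex.exp (-(a : ℂ) * ((‖s‖ : ℝ) : ℂ) ^ (2 * m))) := by
    funext x
    rw [heatKernel, HKaux.Fi, ← integral_smul]
    refine integral_congr_ae (Filter.Eventually.of_forall fun s => ?_)
    dsimp only
    rw [smul_mul_assoc, ← Complex.exp_add]
    congr 2
    ring
  have hgen : ∀ (j : ℕ) (x : EuclideanSpace ℝ (Fin n)),
      (Laplacian'^[j] (heatKernel n m a)) x =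
        c • ∫ s : EuclideanSpace ℝ (Fin n),
          (-((‖s‖ : ℝ) : ℂ) ^ 2) ^ j *
            Complex.exp (Complex.I * ((inner ℝ x s : ℝ) : ℂ) -
              (a : ℂ) * ((‖s‖ : ℝ) : ℂ) ^ (2 * m)) := by
    intro j x
    rw [hK, HKaux.iterate_laplacian_Fi hgood j]
    rw [HKaux.Fi, ← integral_smul]
    refine integral_congr_ae (Filter.Eventually.of_forall fun s => ?_)
    dsimp only
    rw [mul_smul_comm, smul_mul_assoc]
    congr 1
    rw [mul_assoc, ← Complex.exp_add]
    congr 2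
    ring
  refine ⟨fun x => hgen k x, fun x => ?_⟩
  rw [hgen m x, mul_smul_comm]
  congr 1
  rw [← integral_const_mul]
  refine integral_congr_ae (Filter.Eventually.of_forall fun s => ?_)
  dsimp only
  rw [← mul_assoc, ← mul_pow, neg_one_mul, neg_neg, ← pow_mul]
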